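/- Fourier characterization of discrete Sobolev norms: For every integer k ≥ 0 there exist constants c, C > 0, depending only on k and the lattice basis {a_j} (not on ε), such that for every ε = 1/n and every Ω_ε-periodic lattice function f : ε𝕃 → ℂ^m: c ‖f‖²_{ε,k} ≤ Σ_{ξ∈𝕃*_ε} (Λ²_ε(ξ))^k |f̂(ξ)|² ≤ C ‖f‖²_{ε,k}. -/

import Mathlib

open scoped RealInnerProductSpace BigOperators

noncomputable section

namespace DiscreteSobolevFourier

variable (d : ℕ)

/-- The lattice point `ε Σ_j m_j a_j ∈ Ω_ε`, for `ε = 1/n` and `m : Fin d → Fin n`. -/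
def pt (n : ℕ) (a : Fin d → EuclideanSpace ℝ (Fin d)) (m : Fin d → Fin n) :
    EuclideanSpace ℝ (Fin d) :=
  (n : ℝ)⁻¹ • ∑ j, ((m j : ℕ) : ℝ) • a j

/-- Integer coordinates of the frequencies `ξ = Σ_j μ_j b_j ∈ 𝕃*_ε`. -/
def freqIdx (n : ℕ) : Finset (Fin d → ℤ) :=
  Fintype.piFinset fun _ =>
    (Finset.Icc (-(n : ℤ)) (n : ℤ)).filter fun m => -(n : ℤ) ≤ 2 * m ∧ 2 * m < (n : ℤ)

/-- The discrete Fourier transform of a lattice function. -/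
def dft (n : ℕ) {m' : ℕ} (a : Fin d → EuclideanSpace ℝ (Fin d))
    (f : EuclideanSpace ℝ (Fin d) → EuclideanSpace ℂ (Fin m'))
    (ξ : EuclideanSpace ℝ (Fin d)) : EuclideanSpace ℂ (Fin m') :=
  ((n : ℝ)⁻¹ ^ d * (2 * Real.pi) ^ (-(d : ℝ) / 2)) •
    ∑ m : Fin d → Fin n, Complex.exp (-Complex.I * (⟪ξ, pt d n a m⟫ : ℝ)) • f (pt d n a m)

/-- Forward difference `D⁺_s g (x) = ε⁻¹ (g(x+εs) - g(x))`, `ε = 1/n`. -/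
def fwdDiff (n : ℕ) (s : EuclideanSpace ℝ (Fin d)) {F : Type*} [AddCommGroup F] [Module ℝ F]
    (g : EuclideanSpace ℝ (Fin d) → F) : EuclideanSpace ℝ (Fin d) → F :=
  fun x => (n : ℝ) • (g (x + (n : ℝ)⁻¹ • s) - g x)

/-- Iterated difference `D^α = Π_j (D⁺_{a_j})^{α_j}` for a multi-index `α`. -/
def Dalpha (n : ℕ) (a : Fin d → EuclideanSpace ℝ (Fin d)) (α : Fin d → ℕ)
    {F : Type*} [AddCommGroup F] [Module ℝ F]
    (g : EuclideanSpace ℝ (Fin d) → F) : EuclideanSpace ℝ (Fin d) → F :=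
  Fin.foldr d (fun j h => (fwdDiff d n (a j))^[α j] h) g

/-- Multi-indices `α` with `|α| ≤ k`. -/
def multiIdx (k : ℕ) : Finset (Fin d → ℕ) :=
  (Fintype.piFinset fun _ => Finset.range (k + 1)).filter fun α => ∑ j, α j ≤ k

/-- Squared discrete Sobolev norm `‖f‖²_{ε,k} = Σ_{|α|≤k} ε^d Σ_{x∈Ω_ε} |D^α f(x)|²`. -/
def sobNormSq (n : ℕ) (a : Fin d → EuclideanSpace ℝ (Fin d)) (k : ℕ) {m' : ℕ}
    (f : EuclideanSpace ℝ (Fin d) → EuclideanSpace ℂ (Fin m')) : ℝ :=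
  ∑ α ∈ multiIdx d k, (n : ℝ)⁻¹ ^ d *
    ∑ m : Fin d → Fin n, ‖Dalpha d n a α f (pt d n a m)‖ ^ 2

/-- The discrete symbol `Λ²_ε(ξ) = 1 + Σ_j (4/ε²) sin²(ε a_j·ξ/2)`. -/
def lamSq (n : ℕ) (a : Fin d → EuclideanSpace ℝ (Fin d)) (ξ : EuclideanSpace ℝ (Fin d)) : ℝ :=
  1 + ∑ j, 4 * (n : ℝ) ^ 2 * Real.sin (⟪a j, ξ⟫ / (2 * (n : ℝ))) ^ 2


open Finset Complex in
lemma S_eq (n : ℕ) :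
    ((Finset.Icc (-(n : ℤ)) (n : ℤ)).filter fun m => -(n : ℤ) ≤ 2 * m ∧ 2 * m < (n : ℤ)) =
      Finset.Ico (-((n / 2 : ℕ) : ℤ)) ((n : ℤ) - ((n / 2 : ℕ) : ℤ)) := by
  ext x
  simp only [Finset.mem_filter, Finset.mem_Icc, Finset.mem_Ico]
  omega


open Finset Complex in
lemma geom_Ico (w : ℂ) (hw : w ≠ 0) (a₀ : ℤ) (n : ℕ) :
    ∑ μ ∈ Finset.Ico a₀ (a₀ + n), w ^ μ = w ^ a₀ * ∑ i ∈ Finset.range n, w ^ i := by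
  rw [Finset.mul_sum]
  refine Finset.sum_nbij' (fun μ => (μ - a₀).toNat) (fun i => a₀ + (i : ℤ)) ?_ ?_ ?_ ?_ ?_
  · intro μ hμ; simp only [Finset.mem_Ico] at hμ; simp only [Finset.mem_range]; omega
  · intro i hi; simp only [Finset.mem_range] at hi; simp only [Finset.mem_Ico]; omega
  · intro μ hμ; simp only [Finset.mem_Ico] at hμ
    simp only [Int.toNat_of_nonneg (by omega : (0:ℤ) ≤ μ - a₀)]; omega
  · intro i hi; simp only [Finset.mem_range] at hi
    simp only [add_sub_cancel_left, Int.toNat_natCast]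
  · intro μ hμ; simp only [Finset.mem_Ico] at hμ
    rw [← zpow_natCast w, ← zpow_add₀ hw]
    congr 1
    simp only [Int.toNat_of_nonneg (by omega : (0:ℤ) ≤ μ - a₀)]
    omega


open Finset Complex in
lemma char_sum_1d (n : ℕ) (hn : 0 < n) (t : ℤ) :
    ∑ μ ∈ ((Finset.Icc (-(n : ℤ)) (n : ℤ)).filter fun m =>
        -(n : ℤ) ≤ 2 * m ∧ 2 * m < (n : ℤ)),
      Complex.exp (2 * Real.pi * Complex.I * t / n) ^ μ =
      if (n : ℤ) ∣ t then (n : ℂ) else 0 := by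
  set w : ℂ := Complex.exp (2 * Real.pi * Complex.I * t / n) with hw
  have hn' : (n : ℂ) ≠ 0 := Nat.cast_ne_zero.mpr hn.ne'
  have hw0 : w ≠ 0 := Complex.exp_ne_zero _
  have hwn : w ^ (n : ℕ) = 1 := by
    rw [hw, ← Complex.exp_nat_mul]
    have : (n : ℂ) * (2 * Real.pi * Complex.I * t / n) = t * (2 * Real.pi * Complex.I) := by
      field_simp
    rw [this, Complex.exp_int_mul_two_pi_mul_I]
  rw [S_eq]
  have harange : ((n : ℤ) - ((n / 2 : ℕ) : ℤ)) = (-((n / 2 : ℕ) : ℤ)) + (n : ℕ) := by omega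
  rw [harange, geom_Ico w hw0]
  by_cases hdvd : (n : ℤ) ∣ t
  · have hw1 : w = 1 := by
      obtain ⟨s, hs⟩ := hdvd
      rw [hw]
      have : (2 * Real.pi * Complex.I * t / n) = s * (2 * Real.pi * Complex.I) := by
        rw [hs]; push_cast; field_simp
      rw [this, Complex.exp_int_mul_two_pi_mul_I]
    simp [hw1, hdvd]
  · have hw1 : w ≠ 1 := by
      intro h
      rw [hw, Complex.exp_eq_one_iff] at h
      obtain ⟨s, hs⟩ := h
      have h2 : (2 * Real.pi * Complex.I) ≠ 0 := by
        simp [Complex.ext_iff, Real.pi_ne_zero]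
      have : (t : ℂ) = (s : ℂ) * n := by
        field_simp at hs
        rw [hs]; ring
      refine hdvd ⟨s, by exact_mod_cast this.trans (mul_comm _ _)⟩
    rw [geom_sum_eq hw1, hwn]
    simp [hdvd]

section Aux

open Finset Complex

variable {d}

def xi (b : Fin d → EuclideanSpace ℝ (Fin d)) (μ : Fin d → ℤ) : EuclideanSpace ℝ (Fin d) :=
  ∑ j, (μ j : ℝ) • b j

section InnerLemmas
variable {n : ℕ} {a b : Fin d → EuclideanSpace ℝ (Fin d)}
  (hab : ∀ j k, ⟪a j, b k⟫ = if j = k then 2 * Real.pi else 0)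
include hab

lemma inner_a_xi (j : Fin d) (μ : Fin d → ℤ) :
    ⟪a j, xi b μ⟫ = 2 * Real.pi * (μ j : ℝ) := by
  rw [xi, inner_sum]
  rw [Finset.sum_eq_single j]
  · rw [real_inner_smul_right, hab]; simp [mul_comm]
  · intro l _ hl
    rw [real_inner_smul_right, hab]
    simp [Ne.symm hl]
  · simp


lemma inner_xi_pt (μ : Fin d → ℤ) (m : Fin d → Fin n) :
    ⟪xi b μ, pt d n a m⟫ = 2 * Real.pi / n * ∑ j, (μ j : ℝ) * ((m j : ℕ) : ℝ) := by
  rw [pt, real_inner_smul_right, real_inner_comm, sum_inner]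
  rw [Finset.mul_sum, Finset.mul_sum]
  refine Finset.sum_congr rfl fun l _ => ?_
  rw [real_inner_smul_left, xi, inner_sum]
  rw [Finset.sum_eq_single l]
  · rw [real_inner_smul_right, hab]; simp; ring
  · intro j _ hj
    rw [real_inner_smul_right, hab, if_neg (Ne.symm hj), mul_zero]
  · simp

end InnerLemmas

section CharLemmas
variable {n : ℕ} {a b : Fin d → EuclideanSpace ℝ (Fin d)}
  (hab : ∀ j k, ⟪a j, b k⟫ = if j = k then 2 * Real.pi else 0)
include hab

/-- character of the DFT -/
def ch (d n : ℕ) (a : Fin d → EuclideanSpace ℝ (Fin d)) (ξ : EuclideanSpace ℝ (Fin d))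
    (m : Fin d → Fin n) : ℂ :=
  Complex.exp (-Complex.I * (⟪ξ, pt d n a m⟫ : ℝ))

include hab

lemma conj_ch_mul (hn : 0 < n) (μ : Fin d → ℤ) (m m' : Fin d → Fin n) :
    (starRingEnd ℂ) (ch d n a (xi b μ) m) * ch d n a (xi b μ) m' =
      ∏ j, Complex.exp
        (2 * Real.pi * Complex.I * ((((m j : ℕ) : ℤ) - ((m' j : ℕ) : ℤ) : ℤ) : ℂ) / n) ^ (μ j) := by
  have hn' : (n : ℂ) ≠ 0 := Nat.cast_ne_zero.mpr hn.ne'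
  rw [ch, ch, ← Complex.exp_conj, ← Complex.exp_add]
  rw [inner_xi_pt hab, inner_xi_pt hab]
  have : (starRingEnd ℂ) (-Complex.I * ((2 * Real.pi / n * ∑ j, (μ j : ℝ) * ((m j : ℕ) : ℝ) : ℝ) : ℂ))
      + -Complex.I * ((2 * Real.pi / n * ∑ j, (μ j : ℝ) * ((m' j : ℕ) : ℝ) : ℝ) : ℂ)
      = ∑ j, (μ j : ℤ) * (2 * Real.pi * Complex.I * ((((m j : ℕ) : ℤ) - ((m' j : ℕ) : ℤ) : ℤ) : ℂ) / n) := by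
    rw [map_mul, map_neg, Complex.conj_I, Complex.conj_ofReal]
    push_cast
    rw [Finset.mul_sum, Finset.mul_sum, Finset.mul_sum, Finset.mul_sum, ← Finset.sum_add_distrib]
    refine Finset.sum_congr rfl fun j _ => ?_
    field_simp
    ring
  rw [this, Complex.exp_sum]
  exact Finset.prod_congr rfl fun j _ => Complex.exp_int_mul _ (μ j)


lemma ch_orth (hn : 0 < n) (m m' : Fin d → Fin n) :
    ∑ μ ∈ freqIdx d n, (starRingEnd ℂ) (ch d n a (xi b μ) m) * ch d n a (xi b μ) m' =
      if m = m' then ((n : ℂ)) ^ d else 0 := by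
  have : ∑ μ ∈ freqIdx d n, (starRingEnd ℂ) (ch d n a (xi b μ) m) * ch d n a (xi b μ) m' =
      ∏ j, ∑ μj ∈ ((Finset.Icc (-(n : ℤ)) (n : ℤ)).filter fun s =>
          -(n : ℤ) ≤ 2 * s ∧ 2 * s < (n : ℤ)),
        Complex.exp (2 * Real.pi * Complex.I * ((((m j : ℕ) : ℤ) - ((m' j : ℕ) : ℤ) : ℤ) : ℂ) / n) ^ μj := by
    rw [Finset.prod_univ_sum]
    exact Finset.sum_congr rfl fun μ hμ => conj_ch_mul hab hn μ m m'
  rw [this]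
  have heach : ∀ j : Fin d, _ = _ := fun j =>
    char_sum_1d n hn (((m j : ℕ) : ℤ) - ((m' j : ℕ) : ℤ))
  rw [Finset.prod_congr rfl fun j _ => heach j]
  by_cases h : m = m'
  · subst h
    simp
  · have : ∃ j, ¬ ((n : ℤ) ∣ (((m j : ℕ) : ℤ) - ((m' j : ℕ) : ℤ))) := by
      by_contra hc
      push_neg at hc
      refine h (funext fun j => ?_)
      have h1 := Int.eq_zero_of_abs_lt_dvd (hc j) ?_
      · have := (m j).isLt; have := (m' j).isLt
        exact Fin.ext (by omega)
      · have := (m j).isLt; have := (m' j).isLt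
        rw [abs_lt]; constructor <;> [skip; skip] <;> push_cast <;> omega
    obtain ⟨j, hj⟩ := this
    rw [if_neg h]
    exact Finset.prod_eq_zero (Finset.mem_univ j) (by rw [if_neg hj])

lemma plancherel (hn : 0 < n) {m' : ℕ}
    (g : EuclideanSpace ℝ (Fin d) → EuclideanSpace ℂ (Fin m')) :
    ∑ μ ∈ freqIdx d n, ‖dft d n a g (xi b μ)‖ ^ 2 =
      ((n : ℝ)⁻¹ ^ d * ((2 * Real.pi) ^ d)⁻¹) *
        ∑ m : Fin d → Fin n, ‖g (pt d n a m)‖ ^ 2 := by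
  have hnR : (0 : ℝ) < n := by exact_mod_cast hn
  set K : ℝ := (n : ℝ)⁻¹ ^ d * (2 * Real.pi) ^ (-(d : ℝ) / 2) with hK
  have hKpos : 0 < K := by
    apply mul_pos (by positivity)
    exact Real.rpow_pos_of_pos (by positivity) _
  set S : (Fin d → ℤ) → EuclideanSpace ℂ (Fin m') :=
    fun μ => ∑ m : Fin d → Fin n, ch d n a (xi b μ) m • g (pt d n a m) with hS
  have hdft : ∀ μ, dft d n a g (xi b μ) = K • S μ := fun μ => rfl
  have hnorm : ∀ μ, ‖dft d n a g (xi b μ)‖ ^ 2 = K ^ 2 * ‖S μ‖ ^ 2 := by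
    intro μ
    rw [hdft, norm_smul, mul_pow, Real.norm_eq_abs, abs_of_pos hKpos]
  -- main Parseval identity over ℂ
  have main : (∑ μ ∈ freqIdx d n, (‖S μ‖ : ℝ) ^ 2) =
      (n : ℝ) ^ d * ∑ m : Fin d → Fin n, ‖g (pt d n a m)‖ ^ 2 := by
    have mainC : ((∑ μ ∈ freqIdx d n, (‖S μ‖ : ℝ) ^ 2 : ℝ) : ℂ) =
        (((n : ℝ) ^ d * ∑ m : Fin d → Fin n, ‖g (pt d n a m)‖ ^ 2 : ℝ) : ℂ) := by
      push_cast
      have h1 : ∀ μ, ((‖S μ‖ : ℂ)) ^ 2 = (inner ℂ (S μ) (S μ) : ℂ) :=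
        fun μ => (inner_self_eq_norm_sq_to_K (𝕜 := ℂ) (S μ)).symm
      calc ∑ μ ∈ freqIdx d n, ((‖S μ‖ : ℂ)) ^ 2
          = ∑ μ ∈ freqIdx d n, (inner ℂ (S μ) (S μ) : ℂ) := Finset.sum_congr rfl fun μ _ => h1 μ
        _ = ∑ μ ∈ freqIdx d n, ∑ m : Fin d → Fin n, ∑ m'' : Fin d → Fin n,
              ((starRingEnd ℂ) (ch d n a (xi b μ) m) * ch d n a (xi b μ) m'') *
                (inner ℂ (g (pt d n a m)) (g (pt d n a m'')) : ℂ) := by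
            refine Finset.sum_congr rfl fun μ _ => ?_
            rw [hS]
            rw [sum_inner]
            refine Finset.sum_congr rfl fun m _ => ?_
            rw [inner_sum]
            refine Finset.sum_congr rfl fun m'' _ => ?_
            rw [inner_smul_left, inner_smul_right]
            ring
        _ = ∑ m : Fin d → Fin n, ∑ m'' : Fin d → Fin n,
              (∑ μ ∈ freqIdx d n,
                (starRingEnd ℂ) (ch d n a (xi b μ) m) * ch d n a (xi b μ) m'') *
                (inner ℂ (g (pt d n a m)) (g (pt d n a m'')) : ℂ) := by
            rw [Finset.sum_comm]
            refine Finset.sum_congr rfl fun m _ => ?_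
            rw [Finset.sum_comm]
            refine Finset.sum_congr rfl fun m'' _ => ?_
            rw [Finset.sum_mul]
        _ = ∑ m : Fin d → Fin n, ((n : ℂ)) ^ d * (inner ℂ (g (pt d n a m)) (g (pt d n a m)) : ℂ) := by
            refine Finset.sum_congr rfl fun m _ => ?_
            rw [Finset.sum_congr rfl fun m'' _ => by
              rw [ch_orth hab hn m m'']]
            simp [ite_mul]
        _ = (n : ℂ) ^ d * ∑ m : Fin d → Fin n, ((‖g (pt d n a m)‖ : ℂ)) ^ 2 := by
            rw [Finset.mul_sum]
            refine Finset.sum_congr rfl fun m _ => ?_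
            rw [inner_self_eq_norm_sq_to_K]
            push_cast
            rfl
    exact_mod_cast mainC
  calc ∑ μ ∈ freqIdx d n, ‖dft d n a g (xi b μ)‖ ^ 2
      = K ^ 2 * ∑ μ ∈ freqIdx d n, ‖S μ‖ ^ 2 := by
        rw [Finset.mul_sum]; exact Finset.sum_congr rfl fun μ _ => hnorm μ
    _ = K ^ 2 * ((n : ℝ) ^ d * ∑ m : Fin d → Fin n, ‖g (pt d n a m)‖ ^ 2) := by rw [main]
    _ = ((n : ℝ)⁻¹ ^ d * ((2 * Real.pi) ^ d)⁻¹) *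
        ∑ m : Fin d → Fin n, ‖g (pt d n a m)‖ ^ 2 := by
        have hK2 : K ^ 2 = (n : ℝ)⁻¹ ^ d * (n : ℝ)⁻¹ ^ d * ((2 * Real.pi) ^ d)⁻¹ := by
          have h2pi : (0:ℝ) ≤ 2 * Real.pi := by positivity
          rw [hK, mul_pow, ← Real.rpow_natCast ((2 * Real.pi) ^ (-(d:ℝ)/2)) 2,
            ← Real.rpow_mul h2pi]
          have he : (-(d:ℝ)/2 * ((2:ℕ):ℝ)) = -(d:ℝ) := by push_cast; ring
          rw [he, Real.rpow_neg h2pi, Real.rpow_natCast]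
          ring
        rw [hK2]
        have h1 : (n : ℝ)⁻¹ ^ d * (n : ℝ) ^ d = 1 := by
          rw [← mul_pow, inv_mul_cancel₀ hnR.ne', one_pow]
        set T := ∑ m : Fin d → Fin n, ‖g (pt d n a m)‖ ^ 2
        calc (n : ℝ)⁻¹ ^ d * (n : ℝ)⁻¹ ^ d * ((2 * Real.pi) ^ d)⁻¹ * ((n : ℝ) ^ d * T)
            = ((n : ℝ)⁻¹ ^ d * (n : ℝ) ^ d) * ((n : ℝ)⁻¹ ^ d * ((2 * Real.pi) ^ d)⁻¹ * T) := by
              ring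
          _ = (n : ℝ)⁻¹ ^ d * ((2 * Real.pi) ^ d)⁻¹ * T := by rw [h1, one_mul]

end CharLemmas

section DiffLemmas
variable {n : ℕ} {a b : Fin d → EuclideanSpace ℝ (Fin d)}

/-- periodicity is preserved by forward differences -/
lemma per_fwdDiff {F : Type*} [AddCommGroup F] [Module ℝ F]
    (g : EuclideanSpace ℝ (Fin d) → F) (hg : ∀ x j, g (x + a j) = g x)
    (s : EuclideanSpace ℝ (Fin d)) :
    ∀ x j, fwdDiff d n s g (x + a j) = fwdDiff d n s g x := by
  intro x j
  simp only [fwdDiff]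
  rw [show x + a j + (n : ℝ)⁻¹ • s = (x + (n : ℝ)⁻¹ • s) + a j by module, hg, hg]

lemma per_fwdDiff_iter {F : Type*} [AddCommGroup F] [Module ℝ F]
    (g : EuclideanSpace ℝ (Fin d) → F) (hg : ∀ x j, g (x + a j) = g x)
    (s : EuclideanSpace ℝ (Fin d)) (t : ℕ) :
    ∀ x j, (fwdDiff d n s)^[t] g (x + a j) = (fwdDiff d n s)^[t] g x := by
  induction t with
  | zero => simpa using hg
  | succ t ih =>
    rw [Function.iterate_succ']
    exact per_fwdDiff _ ih s


/-- value of the shifted Fin coordinate -/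
lemma fin_succ_val [NeZero n] (x : Fin n) :
    ((x + 1 : Fin n) : ℕ) = if (x : ℕ) + 1 = n then 0 else (x : ℕ) + 1 := by
  have hn : 0 < n := Nat.pos_of_ne_zero (NeZero.ne n)
  have hx := x.isLt
  rcases Nat.lt_or_ge ((x : ℕ) + 1) n with h | h
  · have hn1 : 1 < n := by omega
    have h1 : ((1 : Fin n) : ℕ) = 1 := by
      rw [Fin.val_one', Nat.mod_eq_of_lt hn1]
    rw [if_neg (by omega), Fin.val_add, h1, Nat.mod_eq_of_lt h]
  · have hxe : (x : ℕ) + 1 = n := by omega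
    rw [if_pos hxe, Fin.val_add]
    rcases Nat.eq_or_lt_of_le (show 1 ≤ n by omega) with h1 | h1
    · have hx0 : (x : ℕ) = 0 := by omega
      rw [Fin.val_one', hx0, ← h1]
    · have h2 : ((1 : Fin n) : ℕ) = 1 := by
        rw [Fin.val_one', Nat.mod_eq_of_lt h1]
      rw [h2, hxe, Nat.mod_self]


section withhab
variable (hab : ∀ j k, ⟪a j, b k⟫ = if j = k then 2 * Real.pi else 0)
include hab

lemma dft_fwdDiff (hn : 0 < n) {m' : ℕ}
    (g : EuclideanSpace ℝ (Fin d) → EuclideanSpace ℂ (Fin m'))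
    (hg : ∀ x j, g (x + a j) = g x) (μ : Fin d → ℤ) (j : Fin d) :
    dft d n a (fwdDiff d n (a j) g) (xi b μ) =
      ((n : ℂ) * (Complex.exp (2 * Real.pi * Complex.I * (μ j) / n) - 1)) •
        dft d n a g (xi b μ) := by
  haveI : NeZero n := ⟨hn.ne'⟩
  have hnR : (0 : ℝ) < n := by exact_mod_cast hn
  set w : ℂ := Complex.exp (2 * Real.pi * Complex.I * (μ j) / n) with hw
  -- the shift bijection
  set e : (Fin d → Fin n) ≃ (Fin d → Fin n) :=
    Equiv.piCongrRight fun l => if l = j then Equiv.addRight (1 : Fin n) else Equiv.refl _ with he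
  have he_apply : ∀ (m : Fin d → Fin n) (l : Fin d),
      e m l = if l = j then m l + 1 else m l := by
    intro m l
    simp only [he, Equiv.piCongrRight_apply, Pi.map_apply]
    rcases eq_or_ne l j with rfl | h
    · simp
    · simp [h]
  -- value decomposition
  have hval : ∀ (m : Fin d → Fin n) (l : Fin d),
      ((e m l : ℕ) : ℝ) = ((m l : ℕ) : ℝ) +
        (if l = j then (1 - (if (m j : ℕ) + 1 = n then (n : ℝ) else 0)) else 0) := by
    intro m l
    rcases eq_or_ne l j with rfl | h
    · rw [he_apply, if_pos rfl, if_pos rfl, fin_succ_val]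
      by_cases hc : (m l : ℕ) + 1 = n
      · rw [if_pos hc, if_pos hc]
        have : ((m l : ℕ) : ℝ) + 1 = (n : ℝ) := by exact_mod_cast congrArg Nat.cast hc
        push_cast
        linarith
      · rw [if_neg hc, if_neg hc]
        push_cast
        ring
    · rw [he_apply, if_neg h, if_neg h, add_zero]
  -- point decomposition
  have hpt : ∀ m : Fin d → Fin n,
      pt d n a (e m) = pt d n a m + ((n : ℝ)⁻¹ * (1 - (if (m j : ℕ) + 1 = n then (n : ℝ) else 0))) • a j := by
    intro m
    simp only [pt]
    have : ∀ l : Fin d, ((e m l : ℕ) : ℝ) • a l = ((m l : ℕ) : ℝ) • a l +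
        (if l = j then (1 - (if (m j : ℕ) + 1 = n then (n : ℝ) else 0)) • a j else 0) := by
      intro l
      rcases eq_or_ne l j with rfl | h
      · rw [hval, if_pos rfl, add_smul, if_pos rfl]
      · rw [hval, if_neg h, add_zero, if_neg h, add_zero]
    rw [Finset.sum_congr rfl fun l _ => this l, Finset.sum_add_distrib,
      Finset.sum_ite_eq' Finset.univ j]
    simp only [Finset.mem_univ, if_pos]
    rw [smul_add, smul_smul]
  -- (1) function values under shift
  have h1 : ∀ m : Fin d → Fin n, g (pt d n a m + (n : ℝ)⁻¹ • a j) = g (pt d n a (e m)) := by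
    intro m
    by_cases hc : (m j : ℕ) + 1 = n
    · have : pt d n a m + (n : ℝ)⁻¹ • a j = pt d n a (e m) + a j := by
        rw [hpt m, if_pos hc]
        have hne : (n : ℝ) ≠ 0 := hnR.ne'
        match_scalars <;> (field_simp; try ring)
      rw [this, hg]
    · have : pt d n a m + (n : ℝ)⁻¹ • a j = pt d n a (e m) := by
        rw [hpt m, if_neg hc]
        match_scalars <;> ring
      rw [this]
  -- (2) character under shift
  have h2 : ∀ m : Fin d → Fin n,
      Complex.exp (-Complex.I * (⟪xi b μ, pt d n a m⟫ : ℝ)) =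
        w * Complex.exp (-Complex.I * (⟪xi b μ, pt d n a (e m)⟫ : ℝ)) := by
    intro m
    rw [hw, ← Complex.exp_add, Complex.exp_eq_exp_iff_exists_int]
    have hsum : (∑ l, (μ l : ℝ) * ((e m l : ℕ) : ℝ)) =
        (∑ l, (μ l : ℝ) * ((m l : ℕ) : ℝ)) +
          (μ j : ℝ) * (1 - (if (m j : ℕ) + 1 = n then (n : ℝ) else 0)) := by
      have hstep : ∀ l : Fin d, (μ l : ℝ) * ((e m l : ℕ) : ℝ) =
          (μ l : ℝ) * ((m l : ℕ) : ℝ) +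
          (if l = j then (μ j : ℝ) * (1 - (if (m j : ℕ) + 1 = n then (n : ℝ) else 0)) else 0) := by
        intro l
        rw [hval m l]
        rcases eq_or_ne l j with rfl | h
        · simp [mul_add]
        · simp [h]
      rw [Finset.sum_congr rfl fun l _ => hstep l, Finset.sum_add_distrib,
        Finset.sum_ite_eq' Finset.univ j]
      simp
    rw [inner_xi_pt hab, inner_xi_pt hab, hsum]
    by_cases hc : (m j : ℕ) + 1 = n
    · refine ⟨-(μ j), ?_⟩
      rw [if_pos hc]
      push_cast
      have hne : (n : ℂ) ≠ 0 := by exact_mod_cast hnR.ne'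
      field_simp
      ring
    · refine ⟨0, ?_⟩
      rw [if_neg hc]
      push_cast
      have hne : (n : ℂ) ≠ 0 := by exact_mod_cast hnR.ne'
      field_simp
      ring
  -- main computation
  have hns : ∀ v : EuclideanSpace ℂ (Fin m'), ((n : ℝ) • v : EuclideanSpace ℂ (Fin m')) = (n : ℂ) • v := by
    intro v
    rw [← algebraMap_smul ℂ (n : ℝ) v]
    norm_num
  set T := ∑ m : Fin d → Fin n,
      Complex.exp (-Complex.I * (⟪xi b μ, pt d n a m⟫ : ℝ)) • g (pt d n a m) with hT
  have expand : ∀ m : Fin d → Fin n,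
      Complex.exp (-Complex.I * (⟪xi b μ, pt d n a m⟫ : ℝ)) • fwdDiff d n (a j) g (pt d n a m) =
        (n : ℂ) • (w • (Complex.exp (-Complex.I * (⟪xi b μ, pt d n a (e m)⟫ : ℝ)) •
            g (pt d n a (e m)))) -
          (n : ℂ) • (Complex.exp (-Complex.I * (⟪xi b μ, pt d n a m⟫ : ℝ)) • g (pt d n a m)) := by
    intro m
    simp only [fwdDiff]
    rw [hns, smul_comm, smul_sub]
    rw [show Complex.exp (-Complex.I * (⟪xi b μ, pt d n a m⟫ : ℝ)) •
        g (pt d n a m + (n : ℝ)⁻¹ • a j) =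
        w • (Complex.exp (-Complex.I * (⟪xi b μ, pt d n a (e m)⟫ : ℝ)) • g (pt d n a (e m))) from by
      rw [h1 m]
      conv_lhs => rw [h2 m]
      rw [mul_smul]]
    rw [smul_sub]
  have key : (∑ m : Fin d → Fin n,
      Complex.exp (-Complex.I * (⟪xi b μ, pt d n a m⟫ : ℝ)) • fwdDiff d n (a j) g (pt d n a m)) =
      ((n : ℂ) * (w - 1)) • T := by
    rw [Finset.sum_congr rfl fun m _ => expand m, Finset.sum_sub_distrib, ← Finset.smul_sum,
      ← Finset.smul_sum, ← Finset.smul_sum]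
    rw [show (∑ m : Fin d → Fin n,
        Complex.exp (-Complex.I * (⟪xi b μ, pt d n a (e m)⟫ : ℝ)) • g (pt d n a (e m))) = T from
      Fintype.sum_equiv e _ _ fun m => rfl]
    rw [mul_smul, sub_smul, one_smul, smul_sub]
  simp only [dft]
  rw [key, smul_comm]


lemma dft_fwdDiff_iter (hn : 0 < n) {m' : ℕ}
    (g : EuclideanSpace ℝ (Fin d) → EuclideanSpace ℂ (Fin m'))
    (hg : ∀ x j, g (x + a j) = g x) (μ : Fin d → ℤ) (j : Fin d) (t : ℕ) :
    dft d n a ((fwdDiff d n (a j))^[t] g) (xi b μ) =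
      (((n : ℂ) * (Complex.exp (2 * Real.pi * Complex.I * (μ j) / n) - 1)) ^ t) •
        dft d n a g (xi b μ) := by
  induction t with
  | zero => simp
  | succ t ih =>
    rw [Function.iterate_succ']
    have := dft_fwdDiff hab hn ((fwdDiff d n (a j))^[t] g)
      (per_fwdDiff_iter g hg (a j) t) μ j
    rw [Function.comp_apply, this, ih, ← mul_smul, pow_succ, mul_comm]


lemma dft_Dalpha (hn : 0 < n) {m' : ℕ} (α : Fin d → ℕ)
    (g : EuclideanSpace ℝ (Fin d) → EuclideanSpace ℂ (Fin m'))
    (hg : ∀ x j, g (x + a j) = g x) (μ : Fin d → ℤ) :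
    dft d n a (Dalpha d n a α g) (xi b μ) =
      (∏ j, ((n : ℂ) * (Complex.exp (2 * Real.pi * Complex.I * (μ j) / n) - 1)) ^ (α j)) •
        dft d n a g (xi b μ) := by
  suffices h : ∀ (dd : ℕ) (e : Fin dd → Fin d),
      (∀ x l, (Fin.foldr dd (fun i h => (fwdDiff d n (a (e i)))^[α (e i)] h) g) (x + a l) =
        (Fin.foldr dd (fun i h => (fwdDiff d n (a (e i)))^[α (e i)] h) g) x) ∧
      dft d n a (Fin.foldr dd (fun i h => (fwdDiff d n (a (e i)))^[α (e i)] h) g) (xi b μ) =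
        (∏ i : Fin dd,
          ((n : ℂ) * (Complex.exp (2 * Real.pi * Complex.I * (μ (e i)) / n) - 1)) ^ (α (e i))) •
          dft d n a g (xi b μ) by
    have := (h d id).2
    simpa [Dalpha] using this
  intro dd
  induction dd with
  | zero =>
    intro e
    refine ⟨by simpa [Fin.foldr_zero] using hg, by simp [Fin.foldr_zero]⟩
  | succ dd ih =>
    intro e
    obtain ⟨ihper, ihdft⟩ := ih (fun i => e i.succ)
    constructor
    · intro x l
      rw [Fin.foldr_succ]
      exact per_fwdDiff_iter _ ihper _ _ x l
    · rw [Fin.foldr_succ]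
      rw [dft_fwdDiff_iter hab hn _ ihper μ (e 0) (α (e 0))]
      rw [ihdft, ← mul_smul, Fin.prod_univ_succ]


end withhab
end DiffLemmas

lemma norm_z_sq {n : ℕ} (hn : 0 < n) (q : ℤ) :
    ‖(n : ℂ) * (Complex.exp (2 * Real.pi * Complex.I * q / n) - 1)‖ ^ 2 =
      4 * (n : ℝ) ^ 2 * Real.sin (2 * Real.pi * q / (2 * n)) ^ 2 := by
  have hnR : (0 : ℝ) < n := by exact_mod_cast hn
  set θ : ℝ := 2 * Real.pi * q / n with hθ
  have harg : 2 * Real.pi * Complex.I * q / n = (θ : ℂ) * Complex.I := by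
    rw [hθ]
    push_cast
    field_simp
  have harg2 : 2 * Real.pi * (q : ℝ) / (2 * n) = θ / 2 := by
    rw [hθ]; ring
  rw [harg, harg2, norm_mul, mul_pow, Complex.norm_natCast]
  have hnormsq : ‖Complex.exp ((θ : ℂ) * Complex.I) - 1‖ ^ 2 =
      (Real.cos θ - 1) ^ 2 + Real.sin θ ^ 2 := by
    rw [Complex.exp_mul_I]
    rw [Complex.sq_norm, Complex.normSq_apply]
    simp
    rw [Complex.cos_ofReal_re, Complex.sin_ofReal_re]
    ring
  rw [hnormsq]
  have h1 := Real.sin_sq_add_cos_sq (θ / 2)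
  have h2 := Real.cos_two_mul (θ / 2)
  have h3 : 2 * (θ / 2) = θ := by ring
  rw [h3] at h2
  have h4 := Real.sin_sq_add_cos_sq θ
  nlinarith [sq_nonneg (Real.sin (θ/2)), sq_nonneg ((n:ℝ))]


lemma multiIdx_card_pos (k : ℕ) : 0 < (multiIdx d k).card := by
  refine Finset.card_pos.mpr ⟨fun _ => 0, ?_⟩
  rw [multiIdx, Finset.mem_filter]
  constructor
  · rw [Fintype.mem_piFinset]; intro j; simp
  · simp


lemma bound_low (k : ℕ) (L : Fin d → ℝ) (hL : ∀ j, 0 ≤ L j) :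
    ∑ α ∈ multiIdx d k, ∏ j, L j ^ α j ≤
      ((multiIdx d k).card : ℝ) * (1 + ∑ j, L j) ^ k := by
  have hbase : (1 : ℝ) ≤ 1 + ∑ j, L j := by
    have : (0:ℝ) ≤ ∑ j, L j := Finset.sum_nonneg fun j _ => hL j
    linarith
  have hterm : ∀ α ∈ multiIdx d k, ∏ j, L j ^ α j ≤ (1 + ∑ j, L j) ^ k := by
    intro α hα
    rw [multiIdx, Finset.mem_filter] at hα
    calc ∏ j, L j ^ α j ≤ ∏ j, (1 + ∑ j, L j) ^ α j := by
          refine Finset.prod_le_prod (fun j _ => pow_nonneg (hL j) _) fun j _ => ?_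
          refine pow_le_pow_left₀ (hL j) ?_ _
          have : L j ≤ ∑ j, L j := Finset.single_le_sum (fun j _ => hL j) (Finset.mem_univ j)
          linarith
      _ = (1 + ∑ j, L j) ^ (∑ j, α j) := by rw [Finset.prod_pow_eq_pow_sum]
      _ ≤ (1 + ∑ j, L j) ^ k := pow_le_pow_right₀ hbase hα.2
  calc ∑ α ∈ multiIdx d k, ∏ j, L j ^ α j ≤
      ∑ _α ∈ multiIdx d k, (1 + ∑ j, L j) ^ k := Finset.sum_le_sum hterm
    _ = ((multiIdx d k).card : ℝ) * (1 + ∑ j, L j) ^ k := by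
        rw [Finset.sum_const, nsmul_eq_mul]


lemma bound_high (k : ℕ) (L : Fin d → ℝ) (hL : ∀ j, 0 ≤ L j) :
    (1 + ∑ j, L j) ^ k ≤ (((d + 1) ^ k : ℕ) : ℝ) * ∑ α ∈ multiIdx d k, ∏ j, L j ^ α j := by
  classical
  set t : Option (Fin d) → ℝ := fun o => o.elim 1 L with ht
  have h0 : 1 + ∑ j, L j = ∑ o : Option (Fin d), t o := by
    rw [Fintype.sum_option]; rfl
  have hexp : (1 + ∑ j, L j) ^ k =
      ∑ g ∈ Fintype.piFinset (fun _ : Fin k => (Finset.univ : Finset (Option (Fin d)))),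
        ∏ i : Fin k, t (g i) := by
    rw [h0, ← Finset.prod_univ_sum]
    rw [Finset.prod_const, Finset.card_univ, Fintype.card_fin]
  have hfib : ∀ g : Fin k → Option (Fin d),
      (∏ i : Fin k, t (g i)) = ∏ j : Fin d, L j ^ (Finset.univ.filter fun i => g i = some j).card
      := by
    intro g
    have h1 : (∏ i : Fin k, t (g i)) =
        ∏ o : Option (Fin d), ∏ i ∈ Finset.univ.filter fun i => g i = o, t (g i) :=
      (Finset.prod_fiberwise_of_maps_to (fun i _ => Finset.mem_univ (g i)) _).symm
    rw [h1]
    have h2 : ∀ o : Option (Fin d),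
        (∏ i ∈ Finset.univ.filter fun i => g i = o, t (g i)) =
          t o ^ (Finset.univ.filter fun i => g i = o).card := by
      intro o
      rw [← Finset.prod_const]
      exact Finset.prod_congr rfl fun i hi => by
        rw [(Finset.mem_filter.mp hi).2]
    rw [Finset.prod_congr rfl fun o _ => h2 o, Fintype.prod_option]
    simp [ht]
  have hcard : ∀ g : Fin k → Option (Fin d),
      (fun j => (Finset.univ.filter fun i => g i = some j).card) ∈ multiIdx d k := by
    intro g
    rw [multiIdx, Finset.mem_filter]
    have hsum : ∑ o : Option (Fin d), (Finset.univ.filter fun i => g i = o).card = k := by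
      rw [← Finset.card_eq_sum_card_fiberwise (fun i _ => Finset.mem_univ (g i))]
      simp
    have hle : (∑ j : Fin d, (Finset.univ.filter fun i => g i = some j).card) ≤ k := by
      rw [Fintype.sum_option] at hsum
      omega
    constructor
    · rw [Fintype.mem_piFinset]
      intro j
      rw [Finset.mem_range]
      have : (Finset.univ.filter fun i => g i = some j).card ≤ k := by
        calc _ ≤ (Finset.univ : Finset (Fin k)).card := Finset.card_filter_le _ _
          _ = k := by simp
      omega
    · exact hle
  have hsingle : ∀ g : Fin k → Option (Fin d),
      (∏ i : Fin k, t (g i)) ≤ ∑ α ∈ multiIdx d k, ∏ j, L j ^ α j := by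
    intro g
    rw [hfib g]
    exact Finset.single_le_sum (f := fun α : Fin d → ℕ => ∏ j, L j ^ α j)
      (fun α _ => Finset.prod_nonneg fun j _ => pow_nonneg (hL j) _) (hcard g)
  rw [hexp]
  calc (∑ g ∈ Fintype.piFinset (fun _ : Fin k => (Finset.univ : Finset (Option (Fin d)))),
        ∏ i : Fin k, t (g i)) ≤
      ∑ _g ∈ Fintype.piFinset (fun _ : Fin k => (Finset.univ : Finset (Option (Fin d)))),
        ∑ α ∈ multiIdx d k, ∏ j, L j ^ α j :=
      Finset.sum_le_sum fun g _ => hsingle g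
    _ = (((d + 1) ^ k : ℕ) : ℝ) * ∑ α ∈ multiIdx d k, ∏ j, L j ^ α j := by
      rw [Finset.sum_const, nsmul_eq_mul]
      congr 2
      rw [Fintype.piFinset_univ, Finset.card_univ, Fintype.card_fun]
      simp


end Aux

/-- **Fourier characterization of discrete Sobolev norms.**  For every `k ≥ 0` there are
constants `c, C > 0`, depending only on `k` and the lattice basis (not on `ε = 1/n`), with
`c ‖f‖²_{ε,k} ≤ Σ_{ξ ∈ 𝕃*_ε} (Λ²_ε(ξ))^k |f̂(ξ)|² ≤ C ‖f‖²_{ε,k}`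
for every `Ω_ε`-periodic lattice function `f`. -/
theorem discrete_sobolev_fourier_equiv (hd : 0 < d) (m' : ℕ)
    (a b : Fin d → EuclideanSpace ℝ (Fin d))
    (hab : ∀ j k, ⟪a j, b k⟫ = if j = k then 2 * Real.pi else 0) (k : ℕ) :
    ∃ c C : ℝ, 0 < c ∧ 0 < C ∧
      ∀ n : ℕ, 0 < n →
        ∀ f : EuclideanSpace ℝ (Fin d) → EuclideanSpace ℂ (Fin m'),
          (∀ x, ∀ j, f (x + a j) = f x) →
          c * sobNormSq d n a k f ≤
              (∑ μ ∈ freqIdx d n, lamSq d n a (∑ j, (μ j : ℝ) • b j) ^ k *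
                ‖dft d n a f (∑ j, (μ j : ℝ) • b j)‖ ^ 2) ∧
            (∑ μ ∈ freqIdx d n, lamSq d n a (∑ j, (μ j : ℝ) • b j) ^ k *
                ‖dft d n a f (∑ j, (μ j : ℝ) • b j)‖ ^ 2) ≤
              C * sobNormSq d n a k f := by
  have hApos : (0 : ℝ) < ((multiIdx d k).card : ℝ) := by
    exact_mod_cast multiIdx_card_pos k
  have hBpos : (0 : ℝ) < (((d + 1) ^ k : ℕ) : ℝ) := by
    exact_mod_cast pow_pos (Nat.succ_pos d) k
  have h2pi : (0 : ℝ) < (2 * Real.pi) ^ d := by positivity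
  refine ⟨((2 * Real.pi) ^ d * ((multiIdx d k).card : ℝ))⁻¹,
    (((d + 1) ^ k : ℕ) : ℝ) * ((2 * Real.pi) ^ d)⁻¹, by positivity, by positivity, ?_⟩
  intro n hn f hf
  have hnR : (0 : ℝ) < n := by exact_mod_cast hn
  simp only [show ∀ μ : Fin d → ℤ, (∑ j, (μ j : ℝ) • b j) = xi b μ from fun _ => rfl]
  set L : (Fin d → ℤ) → Fin d → ℝ :=
    fun μ j => 4 * (n : ℝ) ^ 2 * Real.sin (⟪a j, xi b μ⟫ / (2 * (n : ℝ))) ^ 2 with hLdef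
  have hlam : ∀ μ, lamSq d n a (xi b μ) = 1 + ∑ j, L μ j := fun μ => rfl
  have hL0 : ∀ μ (j : Fin d), 0 ≤ L μ j := by
    intro μ j; simp only [hLdef]; positivity
  have hLz : ∀ μ (j : Fin d),
      L μ j = ‖(n : ℂ) * (Complex.exp (2 * Real.pi * Complex.I * (μ j) / n) - 1)‖ ^ 2 := by
    intro μ j
    simp only [hLdef]
    rw [inner_a_xi hab j μ, norm_z_sq hn (μ j)]
  have hptnorm : ∀ (α : Fin d → ℕ) μ,
      ‖dft d n a (Dalpha d n a α f) (xi b μ)‖ ^ 2 =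
        (∏ j, L μ j ^ α j) * ‖dft d n a f (xi b μ)‖ ^ 2 := by
    intro α μ
    rw [dft_Dalpha hab hn α f hf μ, norm_smul, mul_pow, norm_prod]
    congr 1
    rw [← Finset.prod_pow]
    refine Finset.prod_congr rfl fun j _ => ?_
    rw [hLz μ j, norm_pow, ← pow_mul, ← pow_mul, mul_comm (α j) 2]
  have hPa : ∀ α ∈ multiIdx d k,
      (∑ μ ∈ freqIdx d n, (∏ j, L μ j ^ α j) * ‖dft d n a f (xi b μ)‖ ^ 2) =
        ((n : ℝ)⁻¹ ^ d * ((2 * Real.pi) ^ d)⁻¹) *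
          ∑ m : Fin d → Fin n, ‖Dalpha d n a α f (pt d n a m)‖ ^ 2 := by
    intro α _
    rw [← plancherel hab hn (Dalpha d n a α f)]
    exact Finset.sum_congr rfl fun μ _ => (hptnorm α μ).symm
  have hsob : sobNormSq d n a k f = (2 * Real.pi) ^ d *
      ∑ α ∈ multiIdx d k, ∑ μ ∈ freqIdx d n,
        (∏ j, L μ j ^ α j) * ‖dft d n a f (xi b μ)‖ ^ 2 := by
    rw [sobNormSq, Finset.mul_sum]
    refine Finset.sum_congr rfl fun α hα => ?_
    rw [hPa α hα]
    rw [← mul_assoc]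
    congr 1
    field_simp
  have hswap : (∑ α ∈ multiIdx d k, ∑ μ ∈ freqIdx d n,
        (∏ j, L μ j ^ α j) * ‖dft d n a f (xi b μ)‖ ^ 2) =
      ∑ μ ∈ freqIdx d n,
        (∑ α ∈ multiIdx d k, ∏ j, L μ j ^ α j) * ‖dft d n a f (xi b μ)‖ ^ 2 := by
    rw [Finset.sum_comm]
    exact Finset.sum_congr rfl fun μ _ => by rw [Finset.sum_mul]
  set A : ℝ := ((multiIdx d k).card : ℝ) with hA
  set B : ℝ := (((d + 1) ^ k : ℕ) : ℝ) with hB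
  set S : ℝ := ∑ μ ∈ freqIdx d n,
      (∑ α ∈ multiIdx d k, ∏ j, L μ j ^ α j) * ‖dft d n a f (xi b μ)‖ ^ 2 with hS
  set FS : ℝ := ∑ μ ∈ freqIdx d n,
      lamSq d n a (xi b μ) ^ k * ‖dft d n a f (xi b μ)‖ ^ 2 with hFS
  have hlow : S ≤ A * FS := by
    rw [hS, hFS, Finset.mul_sum]
    refine Finset.sum_le_sum fun μ _ => ?_
    have h := bound_low k (L μ) (hL0 μ)
    calc (∑ α ∈ multiIdx d k, ∏ j, L μ j ^ α j) * ‖dft d n a f (xi b μ)‖ ^ 2 ≤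
        (A * (1 + ∑ j, L μ j) ^ k) * ‖dft d n a f (xi b μ)‖ ^ 2 :=
          mul_le_mul_of_nonneg_right h (sq_nonneg _)
      _ = A * (lamSq d n a (xi b μ) ^ k * ‖dft d n a f (xi b μ)‖ ^ 2) := by
          rw [hlam μ]; ring
  have hhigh : FS ≤ B * S := by
    rw [hS, hFS, Finset.mul_sum]
    refine Finset.sum_le_sum fun μ _ => ?_
    have h := bound_high k (L μ) (hL0 μ)
    calc lamSq d n a (xi b μ) ^ k * ‖dft d n a f (xi b μ)‖ ^ 2 =
        (1 + ∑ j, L μ j) ^ k * ‖dft d n a f (xi b μ)‖ ^ 2 := by rw [hlam μ]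
      _ ≤ (B * ∑ α ∈ multiIdx d k, ∏ j, L μ j ^ α j) * ‖dft d n a f (xi b μ)‖ ^ 2 :=
          mul_le_mul_of_nonneg_right h (sq_nonneg _)
      _ = B * ((∑ α ∈ multiIdx d k, ∏ j, L μ j ^ α j) * ‖dft d n a f (xi b μ)‖ ^ 2) := by ring
  have hsob' : sobNormSq d n a k f = (2 * Real.pi) ^ d * S := by rw [hsob, hswap]
  have hne1 : (2 * Real.pi) ^ d ≠ 0 := ne_of_gt h2pi
  have hne2 : A ≠ 0 := ne_of_gt hApos
  constructor
  · rw [hsob']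
    have : ((2 * Real.pi) ^ d * A)⁻¹ * ((2 * Real.pi) ^ d * S) = A⁻¹ * S := by
      field_simp
      try ring
    rw [this]
    calc A⁻¹ * S ≤ A⁻¹ * (A * FS) :=
        mul_le_mul_of_nonneg_left hlow (inv_nonneg.mpr hApos.le)
      _ = FS := by
          rw [← mul_assoc, inv_mul_cancel₀ hne2, one_mul]
  · rw [hsob']
    calc FS ≤ B * S := hhigh
      _ = B * ((2 * Real.pi) ^ d)⁻¹ * ((2 * Real.pi) ^ d * S) := by
          rw [mul_assoc, ← mul_assoc (((2 * Real.pi) ^ d)⁻¹), inv_mul_cancel₀ hne1, one_mul]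


end DiscreteSobolevFourier
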